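/- (Critical diffusion-time bound.) Let n ≥ 1, let A be an invertible real n×n matrix, let m_c ∈ ℝⁿ, and let Σ_c, Σ_t be positive definite symmetric real n×n matrices. Then there exist μ_q ∈ ℝⁿ and a positive definite symmetric real n×n matrix Σ_q such that ∫_{ℝⁿ} g_n(s; μ_q, Σ_q) · g_n(s; A x, Σ_t) ds = |det A|⁻¹ · g_n(x; m_c, Σ_c) for all x ∈ ℝⁿ, if and only if the matrix A Σ_c Aᵀ − Σ_t is positive definite; in that case necessarily μ_q = A m_c and Σ_q = A Σ_c Aᵀ − Σ_t. -/

import Mathlib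

open MeasureTheory Matrix
open scoped MatrixOrder

/-- The Gaussian density on `ℝⁿ` with mean `m` and covariance matrix `S`:
`g_n(x; m, S) = ((2π)^n det S)^(−1/2) · exp(−(1/2)⟨x − m, S⁻¹(x − m)⟩)`. -/
noncomputable def gaussDensity (n : ℕ) (m : Fin n → ℝ) (S : Matrix (Fin n) (Fin n) ℝ)
    (x : Fin n → ℝ) : ℝ :=
  ((2 * Real.pi) ^ n * S.det) ^ (-(1 : ℝ) / 2) *
    Real.exp (-(1 / 2) * ((x - m) ⬝ᵥ S⁻¹.mulVec (x - m)))

variable {n : ℕ}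

/-- Real posSemidef with nonzero det is PosDef. -/
lemma posDef_of_posSemidef_det_ne_zero {B : Matrix (Fin n) (Fin n) ℝ}
    (hB : B.PosSemidef) (hd : B.det ≠ 0) : B.PosDef := by
  refine PosDef.of_dotProduct_mulVec_pos hB.1 fun x hx => ?_
  rcases lt_or_eq_of_le (hB.dotProduct_mulVec_nonneg x) with h | h
  · exact h
  · exfalso
    have hBx : B *ᵥ x = 0 := (hB.dotProduct_mulVec_zero_iff x).mp h.symm
    have : x = 0 := by
      have := congrArg (fun v => B⁻¹ *ᵥ v) hBx
      simpa [Matrix.mulVec_mulVec, Matrix.nonsing_inv_mul B (isUnit_iff_ne_zero.mpr hd)]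
        using this
    exact hx this

lemma sqrt_posDef {S : Matrix (Fin n) (Fin n) ℝ} (hS : S.PosDef) :
    (CFC.sqrt S).PosDef := by
  apply posDef_of_posSemidef_det_ne_zero (Matrix.nonneg_iff_posSemidef.mp (CFC.sqrt_nonneg S))
  intro h
  have : (CFC.sqrt S * CFC.sqrt S).det = 0 := by
    rw [Matrix.det_mul, h, mul_zero]
  rw [CFC.sqrt_mul_sqrt_self S hS.posSemidef.nonneg] at this
  exact hS.det_pos.ne' this

lemma integral_gaussDensity (m : Fin n → ℝ) {S : Matrix (Fin n) (Fin n) ℝ} (hS : S.PosDef) :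
    ∫ s : Fin n → ℝ, gaussDensity n m S s = 1 := by
  classical
  set B := CFC.sqrt S with hBdef
  have hBpd : B.PosDef := sqrt_posDef hS
  have hBdet : (0:ℝ) < B.det := hBpd.det_pos
  have hBB : B * B = S := CFC.sqrt_mul_sqrt_self S hS.posSemidef.nonneg
  have hBsq : B.det ^ 2 = S.det := by
    rw [sq, ← Matrix.det_mul, hBB]
  -- B * S⁻¹ * B = 1
  have hB1 : B * S⁻¹ * B = 1 := by
    have hU : IsUnit B.det := isUnit_iff_ne_zero.mpr hBdet.ne'
    rw [← hBB, Matrix.mul_inv_rev, Matrix.mul_assoc, Matrix.mul_assoc,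
      Matrix.nonsing_inv_mul B hU, Matrix.mul_one, Matrix.mul_nonsing_inv B hU]
  -- quadratic form under B
  have dot_helper : ∀ (C : Matrix (Fin n) (Fin n) ℝ) (y w : Fin n → ℝ),
      (C *ᵥ y) ⬝ᵥ w = y ⬝ᵥ (Cᵀ *ᵥ w) := by
    intro C y w
    rw [Matrix.dotProduct_mulVec y Cᵀ w, Matrix.vecMul_transpose]
  have hquad : ∀ y : Fin n → ℝ, (B *ᵥ y) ⬝ᵥ S⁻¹ *ᵥ (B *ᵥ y) = y ⬝ᵥ y := by
    intro y
    have hBsymm : Bᵀ = B := hBpd.isHermitian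
    rw [dot_helper, Matrix.mulVec_mulVec, Matrix.mulVec_mulVec,
      hBsymm, hB1, Matrix.one_mulVec]
  -- change of variables
  have hmap : Measure.map (Matrix.toLin' B) volume
      = ENNReal.ofReal |B.det|⁻¹ • volume := by
    rw [← abs_inv]
    exact Real.map_matrix_volume_pi_eq_smul_volume_pi hBdet.ne'
  have hcont : Continuous fun v : Fin n → ℝ => Real.exp (-(1/2) * (v ⬝ᵥ S⁻¹ *ᵥ v)) := by
    apply Real.continuous_exp.comp
    apply Continuous.mul continuous_const
    simp only [dotProduct, Matrix.mulVec]
    fun_prop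
  have hchange : ∫ y : Fin n → ℝ, Real.exp (-(1/2) * ((B *ᵥ y) ⬝ᵥ S⁻¹ *ᵥ (B *ᵥ y)))
      = |B.det|⁻¹ * ∫ v : Fin n → ℝ, Real.exp (-(1/2) * (v ⬝ᵥ S⁻¹ *ᵥ v)) := by
    have hmeas : Measurable (Matrix.toLin' B) :=
      (Matrix.toLin' B).continuous_of_finiteDimensional.measurable
    have h1 : ∫ v : Fin n → ℝ, Real.exp (-(1/2) * (v ⬝ᵥ S⁻¹ *ᵥ v))
          ∂(Measure.map (Matrix.toLin' B) volume)
        = ∫ y : Fin n → ℝ, Real.exp (-(1/2) * ((B *ᵥ y) ⬝ᵥ S⁻¹ *ᵥ (B *ᵥ y))) := by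
      rw [MeasureTheory.integral_map hmeas.aemeasurable hcont.aestronglyMeasurable]
      simp only [Matrix.toLin'_apply]
    rw [hmap, MeasureTheory.integral_smul_measure,
      ENNReal.toReal_ofReal (by positivity), smul_eq_mul] at h1
    exact h1.symm
  -- the standard Gaussian integral over ℝⁿ
  have hstd : ∫ y : Fin n → ℝ, Real.exp (-(1/2) * (y ⬝ᵥ y))
      = Real.sqrt (2 * Real.pi) ^ n := by
    have : ∀ y : Fin n → ℝ, Real.exp (-(1/2) * (y ⬝ᵥ y))
        = ∏ i, Real.exp (-(1/2) * (y i ^ 2)) := by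
      intro y
      rw [← Real.exp_sum]
      congr 1
      simp [dotProduct, Finset.mul_sum, sq]
    simp_rw [this]
    rw [MeasureTheory.volume_pi, MeasureTheory.integral_fintype_prod_eq_pow (ι := Fin n)
      (f := fun x : ℝ => Real.exp (-(1/2) * x ^ 2))]
    have h1 : ∫ x : ℝ, Real.exp (-(1/2) * x ^ 2) = Real.sqrt (2 * Real.pi) := by
      have h := integral_gaussian (1/2 : ℝ)
      rw [show Real.pi / (1/2 : ℝ) = 2 * Real.pi by ring] at h
      exact h
    rw [h1]
    simp
  -- value of ∫ exp quadratic
  have hqint : ∫ v : Fin n → ℝ, Real.exp (-(1/2) * (v ⬝ᵥ S⁻¹ *ᵥ v))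
      = B.det * Real.sqrt (2 * Real.pi) ^ n := by
    have h2 : ∫ y : Fin n → ℝ, Real.exp (-(1/2) * ((B *ᵥ y) ⬝ᵥ S⁻¹ *ᵥ (B *ᵥ y)))
        = Real.sqrt (2 * Real.pi) ^ n := by
      simp_rw [hquad]; exact hstd
    rw [h2] at hchange
    rw [abs_of_pos hBdet] at hchange
    field_simp at hchange ⊢
    linarith [hchange]
  have hdetB : B.det = Real.sqrt S.det := by
    rw [← hBsq, Real.sqrt_sq hBdet.le]
  -- translation invariance
  have htrans : ∫ s : Fin n → ℝ, Real.exp (-(1/2) * ((s - m) ⬝ᵥ S⁻¹ *ᵥ (s - m)))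
      = ∫ v : Fin n → ℝ, Real.exp (-(1/2) * (v ⬝ᵥ S⁻¹ *ᵥ v)) :=
    MeasureTheory.integral_sub_right_eq_self
      (fun v : Fin n → ℝ => Real.exp (-(1/2) * (v ⬝ᵥ S⁻¹ *ᵥ v))) m
  -- put it together
  unfold gaussDensity
  rw [MeasureTheory.integral_const_mul]
  rw [show (fun s : Fin n → ℝ => Real.exp (-(1 / 2) * ((s - m) ⬝ᵥ S⁻¹ *ᵥ (s - m)))) =
    fun s : Fin n → ℝ => Real.exp (-(1/2) * ((s - m) ⬝ᵥ S⁻¹ *ᵥ (s - m))) from rfl]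
  rw [htrans, hqint, hdetB]
  have h2pi : (0:ℝ) < 2 * Real.pi := by positivity
  have hdS : (0:ℝ) < S.det := hS.det_pos
  have hpow : (0:ℝ) < (2 * Real.pi) ^ n := by positivity
  rw [show (-(1:ℝ)/2) = -(1/2 : ℝ) by norm_num, Real.rpow_neg (by positivity),
    show ((1:ℝ)/2) = (1/2 : ℝ) from rfl, ← Real.sqrt_eq_rpow,
    Real.sqrt_mul hpow.le]
  have hsqpow : Real.sqrt ((2*Real.pi)^n) = Real.sqrt (2*Real.pi) ^ n := by
    rw [Real.sqrt_eq_rpow, Real.sqrt_eq_rpow,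
      ← Real.rpow_natCast ((2*Real.pi) ^ ((1:ℝ)/2)) n, ← Real.rpow_natCast (2*Real.pi) n,
      ← Real.rpow_mul h2pi.le, ← Real.rpow_mul (by positivity)]
    ring_nf
  rw [hsqpow]
  have hs1 : (0:ℝ) < Real.sqrt (2 * Real.pi) := Real.sqrt_pos.mpr h2pi
  have hs2 : (0:ℝ) < Real.sqrt S.det := Real.sqrt_pos.mpr hdS
  field_simp

section helpers
variable {S1 S2 : Matrix (Fin n) (Fin n) ℝ}

lemma dot_helper' (C : Matrix (Fin n) (Fin n) ℝ) (y w : Fin n → ℝ) :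
    (C *ᵥ y) ⬝ᵥ w = y ⬝ᵥ (Cᵀ *ᵥ w) := by
  rw [Matrix.dotProduct_mulVec y Cᵀ w, Matrix.vecMul_transpose]

lemma dot_symm {M : Matrix (Fin n) (Fin n) ℝ} (hM : Mᵀ = M) (a b : Fin n → ℝ) :
    a ⬝ᵥ M *ᵥ b = b ⬝ᵥ M *ᵥ a := by
  rw [dotProduct_comm, dot_helper', hM]

lemma posDef_add (h1 : S1.PosDef) (h2 : S2.PosDef) : (S1 + S2).PosDef := by
  refine PosDef.of_dotProduct_mulVec_pos (h1.1.add h2.1) fun x hx => ?_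
  rw [Matrix.add_mulVec, dotProduct_add]
  exact add_pos (h1.dotProduct_mulVec_pos hx) (h2.dotProduct_mulVec_pos hx)

lemma transpose_eq_of_posDef {M : Matrix (Fin n) (Fin n) ℝ} (hM : M.PosDef) : Mᵀ = M := by
  have := hM.isHermitian
  rwa [Matrix.IsHermitian, Matrix.conjTranspose_eq_transpose_of_trivial] at this

lemma quad_sub {M : Matrix (Fin n) (Fin n) ℝ} (hM : Mᵀ = M) (x y : Fin n → ℝ) :
    (x - y) ⬝ᵥ M *ᵥ (x - y)
      = x ⬝ᵥ M *ᵥ x - 2 * (x ⬝ᵥ M *ᵥ y) + y ⬝ᵥ M *ᵥ y := by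
  rw [Matrix.mulVec_sub, sub_dotProduct, dotProduct_sub, dotProduct_sub,
    dot_symm hM y x]
  ring

end helpers

section square
variable {S1 S2 : Matrix (Fin n) (Fin n) ℝ}

/-- Completing the square for two Gaussian quadratic forms. -/
lemma quad_complete_square (hS1 : S1.PosDef) (hS2 : S2.PosDef)
    (μ1 μ2 s : Fin n → ℝ) :
    (s - μ1) ⬝ᵥ S1⁻¹ *ᵥ (s - μ1) + (s - μ2) ⬝ᵥ S2⁻¹ *ᵥ (s - μ2)
      = (μ1 - μ2) ⬝ᵥ (S1 + S2)⁻¹ *ᵥ (μ1 - μ2)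
        + (s - (S1⁻¹ + S2⁻¹)⁻¹ *ᵥ (S1⁻¹ *ᵥ μ1 + S2⁻¹ *ᵥ μ2)) ⬝ᵥ
            (((S1⁻¹ + S2⁻¹)⁻¹)⁻¹ *ᵥ (s - (S1⁻¹ + S2⁻¹)⁻¹ *ᵥ (S1⁻¹ *ᵥ μ1 + S2⁻¹ *ᵥ μ2))) := by
  classical
  set P := S1⁻¹ with hPdef
  set Q := S2⁻¹ with hQdef
  set R := P + Q with hRdef
  set W := (S1 + S2)⁻¹ with hWdef
  have hP : P.PosDef := hS1.inv
  have hQ : Q.PosDef := hS2.inv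
  have hR : R.PosDef := posDef_add hP hQ
  have hS12 : (S1 + S2).PosDef := posDef_add hS1 hS2
  have hW : W.PosDef := hS12.inv
  have hU1 : IsUnit S1.det := hS1.det_pos.ne'.isUnit
  have hU2 : IsUnit S2.det := hS2.det_pos.ne'.isUnit
  have hUR : IsUnit R.det := hR.det_pos.ne'.isUnit
  have hU12 : IsUnit (S1 + S2).det := hS12.det_pos.ne'.isUnit
  have hPsymm : Pᵀ = P := transpose_eq_of_posDef hP
  have hQsymm : Qᵀ = Q := transpose_eq_of_posDef hQ
  have hRsymm : Rᵀ = R := transpose_eq_of_posDef hR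
  have hWsymm : Wᵀ = W := transpose_eq_of_posDef hW
  have hRisymm : (R⁻¹)ᵀ = R⁻¹ := by rw [Matrix.transpose_nonsing_inv, hRsymm]
  have hRR : ((S1⁻¹ + S2⁻¹)⁻¹)⁻¹ = R := by
    rw [← hRdef, Matrix.nonsing_inv_nonsing_inv _ hUR]
  -- W * (S1 + S2) = 1 and (S1 + S2) * W = 1
  have hW1 : W * (S1 + S2) = 1 := Matrix.nonsing_inv_mul _ hU12
  have hW2 : (S1 + S2) * W = 1 := Matrix.mul_nonsing_inv _ hU12
  -- key : R = S2⁻¹ * (S1 + S2) * S1⁻¹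
  have key : R = Q * (S1 + S2) * P := by
    rw [Matrix.mul_add, Matrix.add_mul, hQdef, hPdef,
      Matrix.mul_assoc S2⁻¹ S1 S1⁻¹, Matrix.mul_nonsing_inv _ hU1, Matrix.mul_one,
      Matrix.nonsing_inv_mul _ hU2, Matrix.one_mul]
    exact (add_comm S2⁻¹ S1⁻¹).symm
  have key' : R = P * (S1 + S2) * Q := by
    rw [Matrix.mul_add, Matrix.add_mul, hQdef, hPdef,
      Matrix.mul_assoc S1⁻¹ S2 S2⁻¹, Matrix.mul_nonsing_inv _ hU2, Matrix.mul_one,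
      Matrix.nonsing_inv_mul _ hU1, Matrix.one_mul]
    exact (add_comm S2⁻¹ S1⁻¹).symm
  have hRinv : R⁻¹ = S1 * W * S2 := by
    rw [key, Matrix.mul_inv_rev, Matrix.mul_inv_rev, hQdef, hPdef,
      Matrix.nonsing_inv_nonsing_inv _ hU1, Matrix.nonsing_inv_nonsing_inv _ hU2, hWdef,
      Matrix.mul_assoc]
  have hRinv' : R⁻¹ = S2 * W * S1 := by
    rw [key', Matrix.mul_inv_rev, Matrix.mul_inv_rev, hQdef, hPdef,
      Matrix.nonsing_inv_nonsing_inv _ hU1, Matrix.nonsing_inv_nonsing_inv _ hU2, hWdef,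
      Matrix.mul_assoc]
  have hPRQ : P * R⁻¹ * Q = W := by
    rw [hRinv, hPdef, hQdef, ← Matrix.mul_assoc, ← Matrix.mul_assoc,
      Matrix.nonsing_inv_mul _ hU1, Matrix.one_mul, Matrix.mul_assoc,
      Matrix.mul_nonsing_inv _ hU2, Matrix.mul_one]
  have hQRP : Q * R⁻¹ * P = W := by
    rw [hRinv', hPdef, hQdef, ← Matrix.mul_assoc, ← Matrix.mul_assoc,
      Matrix.nonsing_inv_mul _ hU2, Matrix.one_mul, Matrix.mul_assoc,
      Matrix.mul_nonsing_inv _ hU1, Matrix.mul_one]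
  have hPRP : P * R⁻¹ * P = P - W := by
    rw [hRinv, hPdef, ← Matrix.mul_assoc, ← Matrix.mul_assoc,
      Matrix.nonsing_inv_mul _ hU1, Matrix.one_mul]
    have h1 : W * S2 = 1 - W * S1 := by
      rw [← hW1, Matrix.mul_add]; abel
    rw [h1, Matrix.sub_mul, Matrix.one_mul, Matrix.mul_assoc,
      Matrix.mul_nonsing_inv _ hU1, Matrix.mul_one]
  have hQRQ : Q * R⁻¹ * Q = Q - W := by
    rw [hRinv', hQdef, ← Matrix.mul_assoc, ← Matrix.mul_assoc,
      Matrix.nonsing_inv_mul _ hU2, Matrix.one_mul]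
    have h1 : W * S1 = 1 - W * S2 := by
      rw [← hW1, Matrix.mul_add]; abel
    rw [h1, Matrix.sub_mul, Matrix.one_mul, Matrix.mul_assoc,
      Matrix.mul_nonsing_inv _ hU2, Matrix.mul_one]
  set u := P *ᵥ μ1 + Q *ᵥ μ2 with hudef
  set ms := R⁻¹ *ᵥ u with hmsdef
  rw [hRR]
  -- expand all quadratics
  rw [quad_sub hPsymm, quad_sub hQsymm, quad_sub hRsymm, quad_sub hWsymm]
  -- scalar identities
  have e1 : s ⬝ᵥ R *ᵥ s = s ⬝ᵥ P *ᵥ s + s ⬝ᵥ Q *ᵥ s := by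
    rw [hRdef, Matrix.add_mulVec, dotProduct_add]
  have hRms : R *ᵥ ms = u := by
    rw [hmsdef, Matrix.mulVec_mulVec, Matrix.mul_nonsing_inv _ hUR, Matrix.one_mulVec]
  have e2 : s ⬝ᵥ R *ᵥ ms = s ⬝ᵥ P *ᵥ μ1 + s ⬝ᵥ Q *ᵥ μ2 := by
    rw [hRms, hudef, dotProduct_add]
  have e3 : ms ⬝ᵥ R *ᵥ ms
      = μ1 ⬝ᵥ P *ᵥ μ1 - μ1 ⬝ᵥ W *ᵥ μ1 + 2 * (μ1 ⬝ᵥ W *ᵥ μ2)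
        + (μ2 ⬝ᵥ Q *ᵥ μ2 - μ2 ⬝ᵥ W *ᵥ μ2) := by
    rw [hRms, hmsdef, dot_helper', hRisymm, hudef]
    rw [Matrix.mulVec_add, dotProduct_add, add_dotProduct, add_dotProduct]
    have c11 : (P *ᵥ μ1) ⬝ᵥ R⁻¹ *ᵥ (P *ᵥ μ1) = μ1 ⬝ᵥ (P - W) *ᵥ μ1 := by
      rw [dot_helper', hPsymm, Matrix.mulVec_mulVec, Matrix.mulVec_mulVec, hPRP]
    have c12 : (P *ᵥ μ1) ⬝ᵥ R⁻¹ *ᵥ (Q *ᵥ μ2) = μ1 ⬝ᵥ W *ᵥ μ2 := by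
      rw [dot_helper', hPsymm, Matrix.mulVec_mulVec, Matrix.mulVec_mulVec, hPRQ]
    have c21 : (Q *ᵥ μ2) ⬝ᵥ R⁻¹ *ᵥ (P *ᵥ μ1) = μ2 ⬝ᵥ W *ᵥ μ1 := by
      rw [dot_helper', hQsymm, Matrix.mulVec_mulVec, Matrix.mulVec_mulVec, hQRP]
    have c22 : (Q *ᵥ μ2) ⬝ᵥ R⁻¹ *ᵥ (Q *ᵥ μ2) = μ2 ⬝ᵥ (Q - W) *ᵥ μ2 := by
      rw [dot_helper', hQsymm, Matrix.mulVec_mulVec, Matrix.mulVec_mulVec, hQRQ]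
    rw [c11, c12, c21, c22, dot_symm hWsymm μ2 μ1, Matrix.sub_mulVec, Matrix.sub_mulVec,
      dotProduct_sub, dotProduct_sub]
    ring
  rw [e1, e2, e3]
  ring
end square

section conv
variable {S1 S2 : Matrix (Fin n) (Fin n) ℝ}

lemma det_complete_square (hS1 : S1.PosDef) (hS2 : S2.PosDef) :
    S1.det * S2.det = (S1 + S2).det * ((S1⁻¹ + S2⁻¹)⁻¹).det := by
  have hU1 : IsUnit S1.det := hS1.det_pos.ne'.isUnit
  have hU2 : IsUnit S2.det := hS2.det_pos.ne'.isUnit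
  have hS12 : (S1 + S2).PosDef := posDef_add hS1 hS2
  have key : S1⁻¹ + S2⁻¹ = S2⁻¹ * (S1 + S2) * S1⁻¹ := by
    rw [Matrix.mul_add, Matrix.add_mul,
      Matrix.mul_assoc S2⁻¹ S1 S1⁻¹, Matrix.mul_nonsing_inv _ hU1, Matrix.mul_one,
      Matrix.nonsing_inv_mul _ hU2, Matrix.one_mul]
    exact add_comm S1⁻¹ S2⁻¹
  have hdet : (S1⁻¹ + S2⁻¹).det = S2.det⁻¹ * (S1 + S2).det * S1.det⁻¹ := by
    rw [key, Matrix.det_mul, Matrix.det_mul, Matrix.det_nonsing_inv, Matrix.det_nonsing_inv]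
    simp [Ring.inverse_eq_inv']
  have hstar : ((S1⁻¹ + S2⁻¹)⁻¹).det = (S1⁻¹ + S2⁻¹).det⁻¹ := by
    rw [Matrix.det_nonsing_inv]
    simp [Ring.inverse_eq_inv']
  rw [hstar, hdet]
  have h1 : S1.det ≠ 0 := hS1.det_pos.ne'
  have h2 : S2.det ≠ 0 := hS2.det_pos.ne'
  have h12 : (S1 + S2).det ≠ 0 := hS12.det_pos.ne'
  field_simp

lemma gaussDensity_mul (hS1 : S1.PosDef) (hS2 : S2.PosDef) (μ1 μ2 s : Fin n → ℝ) :
    gaussDensity n μ1 S1 s * gaussDensity n μ2 S2 s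
      = gaussDensity n μ2 (S1 + S2) μ1 *
        gaussDensity n ((S1⁻¹ + S2⁻¹)⁻¹ *ᵥ (S1⁻¹ *ᵥ μ1 + S2⁻¹ *ᵥ μ2)) ((S1⁻¹ + S2⁻¹)⁻¹) s := by
  have hSstar : ((S1⁻¹ + S2⁻¹)⁻¹).PosDef := (posDef_add hS1.inv hS2.inv).inv
  have hS12 : (S1 + S2).PosDef := posDef_add hS1 hS2
  have h2pi : (0:ℝ) < (2 * Real.pi) ^ n := by positivity
  have b1 : (0:ℝ) < (2 * Real.pi) ^ n * S1.det := by
    exact mul_pos h2pi hS1.det_pos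
  have b2 : (0:ℝ) < (2 * Real.pi) ^ n * S2.det := mul_pos h2pi hS2.det_pos
  have b3 : (0:ℝ) < (2 * Real.pi) ^ n * (S1 + S2).det := mul_pos h2pi hS12.det_pos
  have b4 : (0:ℝ) < (2 * Real.pi) ^ n * ((S1⁻¹ + S2⁻¹)⁻¹).det := mul_pos h2pi hSstar.det_pos
  unfold gaussDensity
  rw [show ∀ a b c d : ℝ, a * Real.exp b * (c * Real.exp d) = (a * c) * Real.exp (b + d)
    from fun a b c d => by rw [Real.exp_add]; ring,
    show ∀ a b c d : ℝ, a * Real.exp b * (c * Real.exp d) = (a * c) * Real.exp (b + d)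
    from fun a b c d => by rw [Real.exp_add]; ring]
  have hconst : ((2 * Real.pi) ^ n * S1.det) ^ (-(1:ℝ)/2) *
        ((2 * Real.pi) ^ n * S2.det) ^ (-(1:ℝ)/2)
      = ((2 * Real.pi) ^ n * (S1 + S2).det) ^ (-(1:ℝ)/2) *
        ((2 * Real.pi) ^ n * ((S1⁻¹ + S2⁻¹)⁻¹).det) ^ (-(1:ℝ)/2) := by
    rw [← Real.mul_rpow b1.le b2.le, ← Real.mul_rpow b3.le b4.le]
    congr 1
    linear_combination ((2 * Real.pi) ^ n : ℝ) ^ 2 * det_complete_square hS1 hS2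
  rw [hconst]
  congr 1
  congr 1
  have hq := quad_complete_square hS1 hS2 μ1 μ2 s
  linear_combination (-(1:ℝ)/2) * hq

lemma integral_gaussDensity_mul (hS1 : S1.PosDef) (hS2 : S2.PosDef) (μ1 μ2 : Fin n → ℝ) :
    ∫ s : Fin n → ℝ, gaussDensity n μ1 S1 s * gaussDensity n μ2 S2 s
      = gaussDensity n μ2 (S1 + S2) μ1 := by
  have hSstar : ((S1⁻¹ + S2⁻¹)⁻¹).PosDef := (posDef_add hS1.inv hS2.inv).inv
  simp_rw [gaussDensity_mul hS1 hS2 μ1 μ2]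
  rw [MeasureTheory.integral_const_mul, integral_gaussDensity _ hSstar, mul_one]
end conv

section scale
variable {A S Sc : Matrix (Fin n) (Fin n) ℝ}

lemma gaussDensity_symm (m x : Fin n → ℝ) (S : Matrix (Fin n) (Fin n) ℝ) :
    gaussDensity n m S x = gaussDensity n x S m := by
  have hq : (m - x) ⬝ᵥ S⁻¹ *ᵥ (m - x) = (x - m) ⬝ᵥ S⁻¹ *ᵥ (x - m) := by
    rw [show m - x = -(x - m) by abel, Matrix.mulVec_neg, neg_dotProduct,
      dotProduct_neg, neg_neg]
  unfold gaussDensity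
  rw [hq]

lemma mulVec_ne_zero (hU : IsUnit A.det) {x : Fin n → ℝ} (hx : x ≠ 0) : A *ᵥ x ≠ 0 := by
  intro h0
  apply hx
  have := congrArg (fun v => A⁻¹ *ᵥ v) h0
  simpa [Matrix.mulVec_mulVec, Matrix.nonsing_inv_mul A hU] using this

lemma posDef_conj (hS : S.PosDef) (hA : IsUnit A.det) : (A * S * Aᵀ).PosDef := by
  have hSsymm : Sᵀ = S := transpose_eq_of_posDef hS
  have hAT : IsUnit Aᵀ.det := by rwa [Matrix.det_transpose]
  refine PosDef.of_dotProduct_mulVec_pos ?_ ?_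
  · rw [Matrix.IsHermitian, Matrix.conjTranspose_eq_transpose_of_trivial,
      Matrix.transpose_mul, Matrix.transpose_mul, Matrix.transpose_transpose, hSsymm,
      Matrix.mul_assoc]
  · intro x hx
    have hx' : Aᵀ *ᵥ x ≠ 0 := mulVec_ne_zero hAT hx
    have : (star x) ⬝ᵥ (A * S * Aᵀ) *ᵥ x = (Aᵀ *ᵥ x) ⬝ᵥ S *ᵥ (Aᵀ *ᵥ x) := by
      have hstar : (star x : Fin n → ℝ) = x := by simp
      rw [hstar, ← Matrix.mulVec_mulVec, ← Matrix.mulVec_mulVec, dot_helper' Aᵀ x,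
        Matrix.transpose_transpose]
    rw [this]
    have := hS.dotProduct_mulVec_pos hx'
    simpa using this

lemma gaussDensity_scale (hA : IsUnit A.det) (hSc : Sc.PosDef) (mc x : Fin n → ℝ) :
    |A.det|⁻¹ * gaussDensity n mc Sc x
      = gaussDensity n (A *ᵥ mc) (A * Sc * Aᵀ) (A *ᵥ x) := by
  have hAT : IsUnit Aᵀ.det := by rwa [Matrix.det_transpose]
  have hUSc : IsUnit Sc.det := hSc.det_pos.ne'.isUnit
  have hdet : (A * Sc * Aᵀ).det = A.det ^ 2 * Sc.det := by
    rw [Matrix.det_mul, Matrix.det_mul, Matrix.det_transpose]; ring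
  have hquad : (A *ᵥ x - A *ᵥ mc) ⬝ᵥ (A * Sc * Aᵀ)⁻¹ *ᵥ (A *ᵥ x - A *ᵥ mc)
      = (x - mc) ⬝ᵥ Sc⁻¹ *ᵥ (x - mc) := by
    rw [← Matrix.mulVec_sub]
    rw [Matrix.mul_inv_rev, Matrix.mul_inv_rev]
    rw [dot_helper', Matrix.mulVec_mulVec, Matrix.mulVec_mulVec]
    congr 2
    rw [← Matrix.mul_assoc Aᵀ Aᵀ⁻¹ _, Matrix.mul_nonsing_inv Aᵀ hAT, Matrix.one_mul,
      Matrix.mul_assoc, Matrix.nonsing_inv_mul A hA, Matrix.mul_one]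
  unfold gaussDensity
  rw [hquad, hdet]
  have h2pi : (0:ℝ) < (2 * Real.pi) ^ n := by positivity
  have hAd2 : (0:ℝ) < A.det ^ 2 := pow_two_pos_of_ne_zero hA.ne_zero
  have hconst : ((2 * Real.pi) ^ n * (A.det ^ 2 * Sc.det)) ^ (-(1:ℝ)/2)
      = |A.det|⁻¹ * ((2 * Real.pi) ^ n * Sc.det) ^ (-(1:ℝ)/2) := by
    rw [show (2 * Real.pi) ^ n * (A.det ^ 2 * Sc.det)
        = (A.det ^ 2) * ((2 * Real.pi) ^ n * Sc.det) by ring]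
    rw [Real.mul_rpow hAd2.le (mul_pos h2pi hSc.det_pos).le]
    congr 1
    rw [show (-(1:ℝ)/2) = -(1/2:ℝ) by norm_num, Real.rpow_neg hAd2.le, ← Real.sqrt_eq_rpow,
      Real.sqrt_sq_eq_abs]
  rw [hconst, mul_assoc]
end scale

section inj
variable {S1 S2 : Matrix (Fin n) (Fin n) ℝ}

lemma single_dot_mulVec (M : Matrix (Fin n) (Fin n) ℝ) (i j : Fin n) :
    (Pi.single i 1 : Fin n → ℝ) ⬝ᵥ M *ᵥ (Pi.single j 1) = M i j := by
  classical
  simp [Matrix.mulVec_single, single_dotProduct]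

lemma gaussDensity_inj (hS1 : S1.PosDef) (hS2 : S2.PosDef) {μ1 μ2 : Fin n → ℝ}
    (h : ∀ y : Fin n → ℝ, gaussDensity n μ1 S1 y = gaussDensity n μ2 S2 y) :
    μ1 = μ2 ∧ S1 = S2 := by
  classical
  set P := S1⁻¹ with hPdef
  set Q := S2⁻¹ with hQdef
  have hPs : Pᵀ = P := transpose_eq_of_posDef hS1.inv
  have hQs : Qᵀ = Q := transpose_eq_of_posDef hS2.inv
  have hU1 : IsUnit S1.det := hS1.det_pos.ne'.isUnit
  have hU2 : IsUnit S2.det := hS2.det_pos.ne'.isUnit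
  set a1 : ℝ := ((2 * Real.pi) ^ n * S1.det) ^ (-(1:ℝ)/2) with ha1def
  set a2 : ℝ := ((2 * Real.pi) ^ n * S2.det) ^ (-(1:ℝ)/2) with ha2def
  have ha1 : 0 < a1 := Real.rpow_pos_of_pos (mul_pos (by positivity) hS1.det_pos) _
  have ha2 : 0 < a2 := Real.rpow_pos_of_pos (mul_pos (by positivity) hS2.det_pos) _
  have F : ∀ y : Fin n → ℝ,
      Real.log a1 + (-(1/2:ℝ)) * (y ⬝ᵥ P *ᵥ y - 2*(y ⬝ᵥ P *ᵥ μ1) + μ1 ⬝ᵥ P *ᵥ μ1)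
        = Real.log a2 + (-(1/2:ℝ)) * (y ⬝ᵥ Q *ᵥ y - 2*(y ⬝ᵥ Q *ᵥ μ2) + μ2 ⬝ᵥ Q *ᵥ μ2) := by
    intro y
    have hy := h y
    unfold gaussDensity at hy
    have l1 := congrArg Real.log hy
    rw [Real.log_mul ha1.ne' (Real.exp_ne_zero _), Real.log_mul ha2.ne' (Real.exp_ne_zero _),
      Real.log_exp, Real.log_exp, quad_sub hPs, quad_sub hQs] at l1
    exact l1
  have key1 : ∀ y : Fin n → ℝ, y ⬝ᵥ P *ᵥ y = y ⬝ᵥ Q *ᵥ y := by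
    intro y
    have h1 := F y
    have h2 := F (-y)
    have h3 := F (0 : Fin n → ℝ)
    simp only [Matrix.mulVec_neg, neg_dotProduct, dotProduct_neg, neg_neg] at h2
    simp only [zero_dotProduct, dotProduct_zero, Matrix.mulVec_zero] at h3
    linarith
  have key2 : P = Q := by
    have hM : ∀ y : Fin n → ℝ, y ⬝ᵥ (P - Q) *ᵥ y = 0 := by
      intro y
      rw [Matrix.sub_mulVec, dotProduct_sub, key1 y, sub_self]
    have hsym : (P - Q)ᵀ = P - Q := by rw [Matrix.transpose_sub, hPs, hQs]
    have hzero : ∀ i j, (P - Q) i j = 0 := by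
      intro i j
      have hii := hM (Pi.single i 1)
      have hjj := hM (Pi.single j 1)
      have hij := hM (Pi.single i 1 + Pi.single j 1)
      rw [add_dotProduct, Matrix.mulVec_add, dotProduct_add,
        dotProduct_add] at hij
      rw [single_dot_mulVec] at hii hjj
      rw [single_dot_mulVec, single_dot_mulVec, single_dot_mulVec, single_dot_mulVec] at hij
      have hsym' : (P - Q) j i = (P - Q) i j := by
        have := congrFun (congrFun hsym i) j
        rw [Matrix.transpose_apply] at this
        exact this
      linarith
    ext i j
    have := hzero i j
    rw [Matrix.sub_apply] at this
    linarith
  have hS1S2 : S1 = S2 := by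
    rw [← Matrix.nonsing_inv_nonsing_inv S1 hU1, ← Matrix.nonsing_inv_nonsing_inv S2 hU2,
      ← hPdef, ← hQdef, key2]
  refine ⟨?_, hS1S2⟩
  have ha : a1 = a2 := by rw [ha1def, ha2def, hS1S2]
  have key3 : ∀ y : Fin n → ℝ, y ⬝ᵥ P *ᵥ μ1 = y ⬝ᵥ P *ᵥ μ2 := by
    intro y
    have h1 := F y
    have h0 := F (0 : Fin n → ℝ)
    rw [← key2, ha] at h1 h0
    simp only [zero_dotProduct, dotProduct_zero, Matrix.mulVec_zero] at h0
    have := key1 y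
    rw [← key2] at this
    linarith
  have hv : P *ᵥ μ1 = P *ᵥ μ2 := by
    have h4 := key3 (P *ᵥ μ1 - P *ᵥ μ2)
    have h5 : (P *ᵥ μ1 - P *ᵥ μ2) ⬝ᵥ (P *ᵥ μ1 - P *ᵥ μ2) = 0 := by
      rw [dotProduct_sub, h4, sub_self]
    have := dotProduct_self_eq_zero.mp h5
    exact sub_eq_zero.mp this
  have := congrArg (fun v => S1 *ᵥ v) hv
  simpa [Matrix.mulVec_mulVec, hPdef, Matrix.mul_nonsing_inv S1 hU1] using this
end inj

/-- Critical diffusion-time bound: a Gaussian context `(μ_q, Σ_q)` reproducing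
`|det A|⁻¹ g_n(·; m_c, Σ_c)` after convolution with the forward kernel `g_n(s; A x, Σ_t)`
exists iff `A Σ_c Aᵀ − Σ_t` is positive definite, in which case necessarily
`μ_q = A m_c` and `Σ_q = A Σ_c Aᵀ − Σ_t`. -/
theorem critical_diffusion_time_bound (n : ℕ) (hn : 1 ≤ n)
    (A : Matrix (Fin n) (Fin n) ℝ) (hA : IsUnit A.det)
    (mc : Fin n → ℝ) (Sc St : Matrix (Fin n) (Fin n) ℝ)
    (hSc : Sc.PosDef) (hSt : St.PosDef) :
    ((∃ (μq : Fin n → ℝ) (Sq : Matrix (Fin n) (Fin n) ℝ), Sq.PosDef ∧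
        ∀ x : Fin n → ℝ,
          ∫ s : Fin n → ℝ, gaussDensity n μq Sq s * gaussDensity n (A.mulVec x) St s
            = |A.det|⁻¹ * gaussDensity n mc Sc x)
      ↔ (A * Sc * Aᵀ - St).PosDef)
    ∧ ∀ (μq : Fin n → ℝ) (Sq : Matrix (Fin n) (Fin n) ℝ), Sq.PosDef →
        (∀ x : Fin n → ℝ,
          ∫ s : Fin n → ℝ, gaussDensity n μq Sq s * gaussDensity n (A.mulVec x) St s
            = |A.det|⁻¹ * gaussDensity n mc Sc x) →
        μq = A.mulVec mc ∧ Sq = A * Sc * Aᵀ - St := by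
  classical
  have hASA : (A * Sc * Aᵀ).PosDef := posDef_conj hSc hA
  have uniq : ∀ (μq : Fin n → ℝ) (Sq : Matrix (Fin n) (Fin n) ℝ), Sq.PosDef →
      (∀ x : Fin n → ℝ,
        ∫ s : Fin n → ℝ, gaussDensity n μq Sq s * gaussDensity n (A.mulVec x) St s
          = |A.det|⁻¹ * gaussDensity n mc Sc x) →
      μq = A.mulVec mc ∧ Sq = A * Sc * Aᵀ - St := by
    intro μq Sq hSq heq
    have hSqSt : (Sq + St).PosDef := posDef_add hSq hSt
    have hg : ∀ y : Fin n → ℝ, gaussDensity n μq (Sq + St) y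
        = gaussDensity n (A *ᵥ mc) (A * Sc * Aᵀ) y := by
      intro y
      have hx := heq (A⁻¹ *ᵥ y)
      have hAy : A *ᵥ (A⁻¹ *ᵥ y) = y := by
        rw [Matrix.mulVec_mulVec, Matrix.mul_nonsing_inv A hA, Matrix.one_mulVec]
      rw [integral_gaussDensity_mul hSq hSt, hAy, gaussDensity_scale hA hSc, hAy,
        gaussDensity_symm y μq] at hx
      exact hx
    obtain ⟨hμ, hSig⟩ := gaussDensity_inj hSqSt hASA hg
    exact ⟨hμ, eq_sub_of_add_eq hSig⟩
  refine ⟨⟨?_, ?_⟩, uniq⟩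
  · rintro ⟨μq, Sq, hSq, heq⟩
    obtain ⟨hμ, hSig⟩ := uniq μq Sq hSq heq
    rwa [← hSig]
  · intro hpos
    refine ⟨A *ᵥ mc, A * Sc * Aᵀ - St, hpos, fun x => ?_⟩
    rw [integral_gaussDensity_mul hpos hSt, sub_add_cancel,
      gaussDensity_symm (A *ᵥ x) (A *ᵥ mc)]
    exact (gaussDensity_scale hA hSc mc x).symm
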